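/- Let A = J_{λ,n} be a single n×n Jordan block with eigenvalue λ over a field F, and let q(t) be any monic polynomial of degree n over F. Then there exist vectors v, w ∈ F^n such that the characteristic polynomial of A + v·wᵀ equals q(t). In particular one may take v = e_n and w = ∑_{i=0}^{n-1} a_i e_{n-i}, where p_A(t) − q(t) = ∑_{i=0}^{n-1} a_i (t−λ)^{n-1-i}. -/
import Mathlib

open Polynomial Matrix

lemma det_aux {R : Type*} [CommRing R] : ∀ (n : ℕ) (d : R) (b : ℕ → R),
    Matrix.det (Matrix.of fun i j : Fin (n+1) =>
      (if i = j then d else if (i:ℕ)+1 = (j:ℕ) then -1 else 0)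
        - (if (i:ℕ) = n then b (n - (j:ℕ)) else 0))
    = d^(n+1) - ∑ i ∈ Finset.range (n+1), b i * d^(n-i) := by
  intro n
  induction n with
  | zero =>
    intro d b
    simp [Matrix.det_fin_one]
  | succ n ih =>
    intro d b
    set M : Matrix (Fin (n+2)) (Fin (n+2)) R := Matrix.of (fun i j : Fin (n+2) =>
      (if i = j then d else if (i:ℕ)+1 = (j:ℕ) then -1 else 0)
        - (if (i:ℕ) = n+1 then b (n+1 - (j:ℕ)) else 0)) with hM
    rw [Matrix.det_succ_column_zero, Fin.sum_univ_succ, Fin.sum_univ_castSucc]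
    have h0 : ∀ i : Fin n, M (i.castSucc.succ) 0 = 0 := by
      intro i
      have h1 : (i.castSucc.succ : Fin (n+2)) ≠ 0 := Fin.succ_ne_zero _
      have h4 : (i : ℕ) ≠ n := Nat.ne_of_lt i.isLt
      have h3 : ((i.castSucc.succ : Fin (n+2)) : ℕ) ≠ n + 1 := by
        simp [Fin.val_succ]; omega
      simp [hM, h1, h3, h4, Fin.ext_iff]
    have hmid : (∑ i : Fin n, (-1:R)^((i.castSucc.succ : Fin (n+2)):ℕ) *
        M i.castSucc.succ 0 * Matrix.det (M.submatrix i.castSucc.succ.succAbove Fin.succ)) = 0 :=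
      Finset.sum_eq_zero fun i _ => by rw [h0]; ring
    rw [hmid]
    have hM00 : M 0 0 = d := by
      have : ((0 : Fin (n+2)) : ℕ) ≠ n + 1 := by simp
      simp [hM, this]
    have hlast0 : M (Fin.last n).succ 0 = - b (n+1) := by
      have h1 : ((Fin.last n).succ : Fin (n+2)) ≠ 0 := Fin.succ_ne_zero _
      have h2 : (((Fin.last n).succ : Fin (n+2)) : ℕ) = n + 1 := by simp
      simp [hM, h1, h2]
    have hminor0 : M.submatrix ((0 : Fin (n+2)).succAbove) Fin.succ =
        Matrix.of (fun i j : Fin (n+1) =>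
          (if i = j then d else if (i:ℕ)+1 = (j:ℕ) then -1 else 0)
            - (if (i:ℕ) = n then b (n - (j:ℕ)) else 0)) := by
      ext i j
      have e2 : (((i.succ : Fin (n+2)):ℕ)+1 = ((j.succ : Fin (n+2)):ℕ)) ↔ ((i:ℕ)+1 = (j:ℕ)) := by
        simp [Fin.val_succ]
      have e3 : (((i.succ : Fin (n+2)):ℕ) = n+1) ↔ ((i:ℕ) = n) := by simp [Fin.val_succ]
      have e4 : n + 1 - ((j.succ : Fin (n+2)):ℕ) = n - (j:ℕ) := by simp [Fin.val_succ]
      simp only [Matrix.submatrix_apply, Fin.succAbove_zero, hM, Matrix.of_apply,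
        Fin.succ_inj, e2, e3, e4]
    have hminorlast : Matrix.det (M.submatrix ((Fin.last n).succ).succAbove Fin.succ)
        = (-1 : R)^(n+1) := by
      have hsa : ((Fin.last n).succ : Fin (n+2)).succAbove = Fin.castSucc := by
        rw [Fin.succ_last]; exact Fin.succAbove_last
      rw [hsa]
      have ht : (M.submatrix Fin.castSucc Fin.succ).BlockTriangular OrderDual.toDual := by
        intro i j hij
        have hij' : (i : ℕ) < (j : ℕ) := hij
        have e1 : (i.castSucc : Fin (n+2)) ≠ j.succ := by
          simp [Fin.ext_iff, Fin.val_succ]; omega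
        have e2 : ((i.castSucc : Fin (n+2)):ℕ) + 1 ≠ ((j.succ : Fin (n+2)):ℕ) := by
          simp [Fin.val_succ]; omega
        have e3 : ((i.castSucc : Fin (n+2)):ℕ) ≠ n + 1 := by
          simp; exact Nat.ne_of_lt i.isLt
        have e4 : (i:ℕ) ≠ (j:ℕ) := Nat.ne_of_lt hij'
        have e5 : (i:ℕ) ≠ n + 1 := by have := i.isLt; omega
        simp [hM, e1, e2, e3, e4, e5]
      rw [Matrix.det_of_lowerTriangular _ ht]
      have hdiag : ∀ i : Fin (n+1), (M.submatrix Fin.castSucc Fin.succ) i i = -1 := by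
        intro i
        have e1 : (i.castSucc : Fin (n+2)) ≠ i.succ := by
          simp [Fin.ext_iff, Fin.val_succ]
        have e2 : ((i.castSucc : Fin (n+2)):ℕ) + 1 = ((i.succ : Fin (n+2)):ℕ) := by
          simp [Fin.val_succ]
        have e3 : ((i.castSucc : Fin (n+2)):ℕ) ≠ n + 1 := by
          simp; exact Nat.ne_of_lt i.isLt
        have e5 : (i:ℕ) ≠ n + 1 := by have := i.isLt; omega
        simp [hM, e1, e2, e3, e5]
      rw [Finset.prod_congr rfl fun i _ => hdiag i]
      simp
    rw [hminor0, ih, hminorlast, hM00, hlast0]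
    have hXterm : (-1:R)^((((Fin.last n).succ : Fin (n+2))):ℕ) * (- b (n+1)) * (-1:R)^(n+1)
        = - b (n+1) := by
      have hval : (((Fin.last n).succ : Fin (n+2)):ℕ) = n + 1 := by simp
      rw [hval]
      have : (-1:R)^(n+1) * (-1:R)^(n+1) = 1 := by
        rw [← pow_add]; exact Even.neg_one_pow ⟨n+1, by ring⟩
      calc (-1:R)^(n+1) * (- b (n+1)) * (-1:R)^(n+1)
          = ((-1:R)^(n+1) * (-1:R)^(n+1)) * (- b (n+1)) := by ring
        _ = - b (n+1) := by rw [this]; ring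
    rw [hXterm]
    have hsplit : ∑ i ∈ Finset.range (n+2), b i * d^(n+1-i)
        = (∑ i ∈ Finset.range (n+1), b i * d^(n+1-i)) + b (n+1) := by
      rw [Finset.sum_range_succ]; simp
    have hmul : d * ∑ i ∈ Finset.range (n+1), b i * d^(n-i)
        = ∑ i ∈ Finset.range (n+1), b i * d^(n+1-i) := by
      rw [Finset.mul_sum]
      refine Finset.sum_congr rfl fun i hi => ?_
      have : n + 1 - i = (n - i) + 1 := by
        have := Finset.mem_range.mp hi; omega
      rw [this, pow_succ]; ring
    rw [hsplit, ← hmul]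
    simp only [Fin.val_zero, pow_zero]
    ring

/-- The `r × r` upper-triangular Jordan block with eigenvalue `μ`. -/
def jordanBlock {F : Type*} [Field F] (μ : F) (r : ℕ) : Matrix (Fin r) (Fin r) F :=
  Matrix.of fun i j => if i = j then μ else if (i : ℕ) + 1 = (j : ℕ) then 1 else 0

lemma jordan_charpoly {F : Type*} [Field F] (μ : F) (r : ℕ) :
    (jordanBlock μ r).charpoly = (X - C μ) ^ r := by
  have ht : (charmatrix (jordanBlock μ r)).BlockTriangular id := by
    intro i j hij
    have h1 : i ≠ j := by exact fun h => absurd h.symm (ne_of_lt hij)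
    rw [charmatrix_apply_ne _ _ _ h1]
    have : jordanBlock μ r i j = 0 := by
      have : (i:ℕ) + 1 ≠ (j:ℕ) := by have : (j:ℕ) < (i:ℕ) := hij; omega
      simp [jordanBlock, h1, this]
    simp [this]
  rw [Matrix.charpoly, Matrix.det_of_upperTriangular ht]
  have : ∀ i : Fin r, charmatrix (jordanBlock μ r) i i = X - C μ := by
    intro i
    rw [charmatrix_apply_eq]
    simp [jordanBlock]
  rw [Finset.prod_congr rfl fun i _ => this i]
  simp

theorem stmt_8 (F : Type*) [Field F] (n : ℕ) (hn : 0 < n) (lam : F)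
    (A : Matrix (Fin n) (Fin n) F) (hA : A = jordanBlock lam n)
    (q : Polynomial F) (hq : q.Monic) (hdeg : q.natDegree = n)
    (a : ℕ → F)
    (ha : A.charpoly - q =
      ∑ i ∈ Finset.range n, Polynomial.C (a i) * (Polynomial.X - Polynomial.C lam) ^ (n - 1 - i))
    (v w : Fin n → F)
    (hv : v = fun j : Fin n => if (j : ℕ) = n - 1 then (1 : F) else 0)
    (hw : w = fun j : Fin n => a (n - 1 - (j : ℕ))) :
    (A + vecMulVec v w).charpoly = q ∧
      ∃ v' w' : Fin n → F, (A + vecMulVec v' w').charpoly = q := by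
  obtain ⟨m, rfl⟩ : ∃ m, n = m + 1 := ⟨n - 1, (Nat.succ_pred_eq_of_pos hn).symm⟩
  subst hA hv hw
  have hcm : charmatrix (jordanBlock lam (m+1) + vecMulVec
        (fun j : Fin (m+1) => if (j : ℕ) = m + 1 - 1 then (1 : F) else 0)
        (fun j : Fin (m+1) => a (m + 1 - 1 - (j : ℕ)))) =
      Matrix.of (fun i j : Fin (m+1) =>
        (if i = j then (X - C lam) else if (i:ℕ)+1 = (j:ℕ) then -1 else 0)
          - (if (i:ℕ) = m then (fun k => C (a k)) (m - (j:ℕ)) else 0)) := by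
    ext i j
    simp only [charmatrix_apply, Matrix.add_apply, vecMulVec_apply, jordanBlock,
      Matrix.of_apply, Matrix.diagonal_apply, Nat.add_sub_cancel, Matrix.scalar_apply]
    by_cases hij : i = j <;> by_cases him : (i:ℕ) = m <;>
      simp [hij, him, Fin.ext_iff, map_add, _root_.map_mul] <;> (try split_ifs) <;>
      (try simp [map_add]) <;> (try ring)
  have hchar : (jordanBlock lam (m+1) + vecMulVec
        (fun j : Fin (m+1) => if (j : ℕ) = m + 1 - 1 then (1 : F) else 0)
        (fun j : Fin (m+1) => a (m + 1 - 1 - (j : ℕ)))).charpoly =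
      (X - C lam)^(m+1) - ∑ i ∈ Finset.range (m+1), C (a i) * (X - C lam)^(m - i) := by
    rw [Matrix.charpoly, hcm]
    exact det_aux m (X - C lam) (fun k => C (a k))
  have hq' : q = (X - C lam)^(m+1) - ∑ i ∈ Finset.range (m+1), C (a i) * (X - C lam)^(m - i) := by
    have := ha
    rw [jordan_charpoly] at this
    have hsum : ∑ i ∈ Finset.range (m+1), C (a i) * (X - C lam) ^ (m + 1 - 1 - i)
        = ∑ i ∈ Finset.range (m+1), C (a i) * (X - C lam) ^ (m - i) := by
      refine Finset.sum_congr rfl fun i hi => ?_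
      congr 1
    rw [hsum] at this
    linear_combination -this
  exact ⟨hchar.trans hq'.symm, _, _, hchar.trans hq'.symm⟩
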